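/- Under the discrete-time consensus update rule with symmetric time-varying weights bounded between positive constants δ and ā < 1 on every edge, and step size ε satisfying 0 < ε < 1/Δ where Δ is the maximum degree of the graph, every node's state converges as k → ∞ to the average of the initial states: lim_{k→∞} x_i[k] = (1/n) Σ_{j=1}^n x_j[0] for every node i. -/

import Mathlib

open Filter Topology

open Finset in
lemma dtac_gap {n : ℕ} (G : SimpleGraph (Fin n)) [DecidableRel G.Adj]
    (hn : 2 ≤ n) (hconn : G.Connected) :
    ∃ c > 0, ∀ y : Fin n → ℝ, ∑ i, y i = 0 →
      c * ∑ i, (y i)^2 ≤ ∑ i, ∑ j, (if G.Adj i j then (y i - y j)^2 else 0) := by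
  set Q : (Fin n → ℝ) → ℝ := fun y => ∑ i, ∑ j, (if G.Adj i j then (y i - y j)^2 else 0)
    with hQdef
  have hQnonneg : ∀ y, 0 ≤ Q y := by
    intro y
    refine Finset.sum_nonneg fun i _ => Finset.sum_nonneg fun j _ => ?_
    split <;> positivity
  have hQcont : Continuous Q := by
    refine continuous_finset_sum _ fun i _ => continuous_finset_sum _ fun j _ => ?_
    by_cases h : G.Adj i j <;> simp only [h, if_true, if_false]
    · exact ((continuous_apply i).sub (continuous_apply j)).pow 2
    · exact continuous_const
  have hscont : Continuous fun y : Fin n → ℝ => ∑ i, y i :=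
    continuous_finset_sum _ fun i _ => continuous_apply i
  have hsqcont : Continuous fun y : Fin n → ℝ => ∑ i, (y i)^2 :=
    continuous_finset_sum _ fun i _ => (continuous_apply i).pow 2
  set K : Set (Fin n → ℝ) := {y | ∑ i, y i = 0 ∧ ∑ i, (y i)^2 = 1} with hKdef
  have hKclosed : IsClosed K := by
    have : K = (fun y : Fin n → ℝ => ∑ i, y i) ⁻¹' {0} ∩
        (fun y : Fin n → ℝ => ∑ i, (y i)^2) ⁻¹' {1} := by
      ext y; simp [hKdef]
    rw [this]
    exact (isClosed_singleton.preimage hscont).inter (isClosed_singleton.preimage hsqcont)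
  have hKsub : K ⊆ Metric.closedBall 0 1 := by
    intro y hy
    rw [Metric.mem_closedBall, dist_zero_right]
    refine (pi_norm_le_iff_of_nonneg zero_le_one).mpr fun i => ?_
    have h1 : (y i)^2 ≤ 1 := by
      rw [← hy.2]
      exact Finset.single_le_sum (f := fun j => (y j)^2) (fun j _ => sq_nonneg _) (mem_univ i)
    rw [Real.norm_eq_abs]
    exact (sq_le_one_iff_abs_le_one _).mp h1
  have hKcompact : IsCompact K :=
    (isCompact_closedBall (0 : Fin n → ℝ) 1).of_isClosed_subset hKclosed hKsub
  -- nonempty witness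
  have h0n : (0 : ℕ) < n := by omega
  have h1n : (1 : ℕ) < n := by omega
  set i0 : Fin n := ⟨0, h0n⟩
  set i1 : Fin n := ⟨1, h1n⟩
  have hne01 : i0 ≠ i1 := by simp [i0, i1, Fin.ext_iff]
  set aa : ℝ := (Real.sqrt 2)⁻¹ with haa
  have haa2 : aa^2 = 2⁻¹ := by
    rw [haa, inv_pow, Real.sq_sqrt (by norm_num : (0:ℝ) ≤ 2)]
  set y0 : Fin n → ℝ := fun i => (if i = i0 then aa else 0) + (if i = i1 then -aa else 0)
    with hy0
  have hy0K : y0 ∈ K := by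
    constructor
    · simp only [hy0, Finset.sum_add_distrib, Finset.sum_ite_eq', mem_univ, if_true]
      ring
    · have hsq : ∀ i, (y0 i)^2 =
          (if i = i0 then aa^2 else 0) + (if i = i1 then aa^2 else 0) := by
        intro i
        by_cases h0 : i = i0 <;> by_cases h1 : i = i1
        · exact absurd (h0.symm.trans h1) hne01
        · simp [hy0, h0, h1, hne01, Ne.symm hne01]
        · simp [hy0, h0, h1, hne01, Ne.symm hne01]
        · simp [hy0, h0, h1]
      simp only [hsq, Finset.sum_add_distrib, Finset.sum_ite_eq', mem_univ, if_true, haa2]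
      norm_num
  obtain ⟨ym, hymK, hmin⟩ := hKcompact.exists_isMinOn ⟨y0, hy0K⟩ hQcont.continuousOn
  set c : ℝ := Q ym with hc
  have hcpos : 0 < c := by
    rcases (hQnonneg ym).lt_or_eq with h | h
    · exact h
    · exfalso
      -- Q ym = 0 forces ym constant on the connected graph
      have hzero : ∀ i j, G.Adj i j → ym i = ym j := by
        intro i j hij
        have h1 : ∀ i ∈ (univ : Finset (Fin n)),
            (0:ℝ) ≤ ∑ j, (if G.Adj i j then (ym i - ym j)^2 else 0) :=
          fun i _ => Finset.sum_nonneg fun j _ => by split <;> positivity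
        have h2 := (Finset.sum_eq_zero_iff_of_nonneg h1).mp h.symm i (mem_univ i)
        have h3 : ∀ j ∈ (univ : Finset (Fin n)),
            (0:ℝ) ≤ (if G.Adj i j then (ym i - ym j)^2 else 0) :=
          fun j _ => by split <;> positivity
        have h4 := (Finset.sum_eq_zero_iff_of_nonneg h3).mp h2 j (mem_univ j)
        rw [if_pos hij] at h4
        have := pow_eq_zero_iff (n := 2) (by norm_num) |>.mp h4
        linarith [sub_eq_zero.mp this]
      have hconst : ∀ i j : Fin n, ym i = ym j := by
        intro i j
        obtain ⟨w⟩ := hconn.preconnected i j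
        induction w with
        | nil => rfl
        | cons hadj _ ih => exact (hzero _ _ hadj).trans ih
      have hsum0 := hymK.1
      have : ∑ i : Fin n, ym i = (n : ℝ) * ym i0 := by
        rw [Finset.sum_congr rfl fun i _ => hconst i i0]
        simp [mul_comm]
      have hym0 : ym i0 = 0 := by
        rw [this] at hsum0
        have hn0 : (n:ℝ) ≠ 0 := by positivity
        exact (mul_eq_zero.mp hsum0).resolve_left hn0
      have : ∑ i : Fin n, (ym i)^2 = 0 := by
        refine Finset.sum_eq_zero fun i _ => ?_
        rw [hconst i i0, hym0]; ring
      rw [hymK.2] at this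
      norm_num at this
  refine ⟨c, hcpos, fun y hsum => ?_⟩
  set t : ℝ := ∑ i, (y i)^2 with ht
  have htnn : 0 ≤ t := Finset.sum_nonneg fun i _ => sq_nonneg _
  rcases htnn.eq_or_lt with h | htpos
  · rw [← h]
    simpa using hQnonneg y
  · set z : Fin n → ℝ := fun i => y i / Real.sqrt t with hz
    have hst : (0:ℝ) < Real.sqrt t := Real.sqrt_pos.mpr htpos
    have hzK : z ∈ K := by
      constructor
      · simp only [hz, ← Finset.sum_div, hsum, zero_div]
      · have : ∀ i, (z i)^2 = (y i)^2 / t := by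
          intro i
          rw [hz]
          rw [div_pow, Real.sq_sqrt htnn]
        simp only [this, ← Finset.sum_div, ← ht]
        exact div_self htpos.ne'
    have hQz : Q z = Q y / t := by
      have hterm : ∀ i j, (if G.Adj i j then (z i - z j)^2 else 0)
          = (if G.Adj i j then (y i - y j)^2 else 0) / t := by
        intro i j
        by_cases hadj : G.Adj i j
        · rw [if_pos hadj, if_pos hadj]
          simp only [hz]
          rw [div_sub_div_same, div_pow, Real.sq_sqrt htnn]
        · rw [if_neg hadj, if_neg hadj, zero_div]
      simp only [hQdef, hterm, ← Finset.sum_div]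
    have hle : c ≤ Q z := hmin hzK
    rw [hQz, le_div_iff₀ htpos] at hle
    exact hle

open Finset in
/-- Discrete-time average consensus with symmetric time-varying weights in
[δ, ā] with 0 < δ ≤ ā < 1, and step size 0 < ε < 1/Δ, Δ the maximum degree:
every node's state converges to the average of the initial states. -/
theorem dt_average_consensus
    (n : ℕ) (hn : 2 ≤ n)
    (G : SimpleGraph (Fin n)) [DecidableRel G.Adj]
    (hconn : G.Connected)
    (x : ℕ → Fin n → ℝ)
    (a : ℕ → Fin n → Fin n → ℝ)
    (ha_symm : ∀ k i j, a k i j = a k j i)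
    (δ abar : ℝ) (hδ : 0 < δ) (hδa : δ ≤ abar) (habar : abar < 1)
    (hbound : ∀ k i j, G.Adj i j → δ ≤ a k i j ∧ a k i j ≤ abar)
    (ε : ℝ) (hε : 0 < ε) (hεΔ : ε < 1 / (G.maxDegree : ℝ))
    (hdyn : ∀ i k, x (k + 1) i =
      x k i + ε * ∑ j ∈ G.neighborFinset i, a k i j * (x k j - x k i)) :
    ∀ i, Tendsto (fun k => x k i) atTop
      (𝓝 ((1 / (n : ℝ)) * ∑ j, x 0 j)) := by
  have habar0 : 0 < abar := lt_of_lt_of_le hδ hδa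
  have hΔpos : (0:ℝ) < (G.maxDegree : ℝ) := by
    rcases Nat.eq_zero_or_pos G.maxDegree with h | h
    · rw [h] at hεΔ; norm_num at hεΔ; linarith
    · exact_mod_cast h
  have hεΔ1 : ε * (G.maxDegree : ℝ) < 1 := (lt_div_iff₀ hΔpos).mp hεΔ
  have hn0 : (0:ℝ) < (n:ℝ) := by positivity
  set s : ℝ := (1 / (n : ℝ)) * ∑ j, x 0 j with hs
  set y : ℕ → Fin n → ℝ := fun k i => x k i - s with hy
  -- rewrite dynamics with ite sums
  have hdyn' : ∀ k i, x (k + 1) i =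
      x k i + ε * ∑ j, (if G.Adj i j then a k i j * (x k j - x k i) else 0) := by
    intro k i
    rw [hdyn i k, SimpleGraph.neighborFinset_eq_filter, Finset.sum_filter]
  -- sum conservation
  have hsumx : ∀ k, ∑ i, x k i = ∑ i, x 0 i := by
    intro k
    induction k with
    | zero => rfl
    | succ k ih =>
      have key : ∀ i j : Fin n, (if G.Adj j i then a k j i * (x k i - x k j) else 0)
          = -(if G.Adj i j then a k i j * (x k j - x k i) else 0) := by
        intro i j
        by_cases h : G.Adj i j
        · rw [if_pos h, if_pos h.symm, ha_symm k j i]; ring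
        · rw [if_neg h, if_neg (fun h' => h h'.symm), neg_zero]
      have hT : ∑ i, ∑ j, (if G.Adj i j then a k i j * (x k j - x k i) else 0) = 0 := by
        have h2 : ∑ i, ∑ j, (if G.Adj i j then a k i j * (x k j - x k i) else 0)
            = -∑ i, ∑ j, (if G.Adj i j then a k i j * (x k j - x k i) else 0) := by
          conv_lhs => rw [Finset.sum_comm]
          rw [← Finset.sum_neg_distrib]
          refine Finset.sum_congr rfl fun i _ => ?_
          rw [← Finset.sum_neg_distrib]
          exact Finset.sum_congr rfl fun j _ => key i j
        linarith
      calc ∑ i, x (k+1) i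
          = ∑ i, (x k i + ε * ∑ j, (if G.Adj i j then a k i j * (x k j - x k i) else 0)) :=
            Finset.sum_congr rfl fun i _ => hdyn' k i
        _ = ∑ i, x k i + ε * ∑ i, ∑ j, (if G.Adj i j then a k i j * (x k j - x k i) else 0) := by
            rw [Finset.sum_add_distrib, ← Finset.mul_sum]
        _ = ∑ i, x 0 i := by rw [hT, ih]; ring
  have hns : (n:ℝ) * s = ∑ i, x 0 i := by
    rw [hs]; field_simp
  have hysum : ∀ k, ∑ i, y k i = 0 := by
    intro k
    simp only [hy]
    rw [Finset.sum_sub_distrib, hsumx k, Finset.sum_const, card_univ, Fintype.card_fin,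
      nsmul_eq_mul, hns, sub_self]
  -- weights
  set w : ℕ → Fin n → Fin n → ℝ := fun k i j => if G.Adj i j then ε * a k i j else 0 with hw
  have hwsymm : ∀ k i j, w k i j = w k j i := by
    intro k i j
    simp only [hw]
    by_cases h : G.Adj i j
    · rw [if_pos h, if_pos h.symm, ha_symm]
    · rw [if_neg h, if_neg (fun h' => h h'.symm)]
  have hwnn : ∀ k i j, 0 ≤ w k i j := by
    intro k i j
    simp only [hw]
    split
    · next h =>
      have h1 := (hbound k i j h).1
      have : 0 < a k i j := lt_of_lt_of_le hδ h1
      positivity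
    · exact le_refl 0
  have hwlow : ∀ k i j, G.Adj i j → ε * δ ≤ w k i j := by
    intro k i j h
    simp only [hw, if_pos h]
    exact mul_le_mul_of_nonneg_left (hbound k i j h).1 hε.le
  set β : ℝ := ε * abar * (G.maxDegree : ℝ) with hβ
  have hβabar : β ≤ abar := by
    rw [hβ]
    calc ε * abar * (G.maxDegree : ℝ) = (ε * (G.maxDegree : ℝ)) * abar := by ring
      _ ≤ 1 * abar := mul_le_mul_of_nonneg_right hεΔ1.le habar0.le
      _ = abar := one_mul _
  have hrow : ∀ k i, ∑ j, w k i j ≤ β := by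
    intro k i
    have h1 : ∀ j ∈ (univ : Finset (Fin n)), w k i j ≤ (if G.Adj i j then ε * abar else 0) := by
      intro j _
      simp only [hw]
      by_cases h : G.Adj i j
      · rw [if_pos h, if_pos h]
        exact mul_le_mul_of_nonneg_left (hbound k i j h).2 hε.le
      · rw [if_neg h, if_neg h]
    calc ∑ j, w k i j ≤ ∑ j, (if G.Adj i j then ε * abar else 0) := Finset.sum_le_sum h1
      _ = (G.degree i : ℝ) * (ε * abar) := by
          rw [← Finset.sum_filter, Finset.sum_const, ← SimpleGraph.neighborFinset_eq_filter,
            nsmul_eq_mul]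
          rfl
      _ ≤ (G.maxDegree : ℝ) * (ε * abar) := by
          refine mul_le_mul_of_nonneg_right ?_ (by positivity)
          exact_mod_cast G.degree_le_maxDegree i
      _ = β := by rw [hβ]; ring
  -- y dynamics
  have hydyn : ∀ k i, y (k+1) i = y k i - ∑ j, w k i j * (y k i - y k j) := by
    intro k i
    have hterm : ∀ j, w k i j * (y k i - y k j)
        = -(ε * (if G.Adj i j then a k i j * (x k j - x k i) else 0)) := by
      intro j
      simp only [hw, hy]
      by_cases h : G.Adj i j
      · rw [if_pos h, if_pos h]; ring
      · rw [if_neg h, if_neg h]; ring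
    have hsw : ∑ j, w k i j * (y k i - y k j)
        = -(ε * ∑ j, (if G.Adj i j then a k i j * (x k j - x k i) else 0)) := by
      rw [Finset.mul_sum, ← Finset.sum_neg_distrib]
      exact Finset.sum_congr rfl fun j _ => hterm j
    simp only [hy]
    rw [hsw, hdyn' k i]
    ring
  obtain ⟨c, hcpos, hgap⟩ := dtac_gap G hn hconn
  set V : ℕ → ℝ := fun k => ∑ i, (y k i)^2 with hV
  have hVnn : ∀ k, 0 ≤ V k := fun k => Finset.sum_nonneg fun i _ => sq_nonneg _
  set Ly : ℕ → Fin n → ℝ := fun k i => ∑ j, w k i j * (y k i - y k j) with hLy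
  set A : ℕ → ℝ := fun k => ∑ i, y k i * Ly k i with hA
  -- double sum symmetry helper
  have esymm : ∀ k (f : Fin n → ℝ), ∑ i, ∑ j, w k i j * f j = ∑ i, ∑ j, w k i j * f i := by
    intro k f
    rw [Finset.sum_comm]
    refine Finset.sum_congr rfl fun i _ => Finset.sum_congr rfl fun j _ => ?_
    rw [hwsymm k j i]
  have h2A : ∀ k, 2 * A k = ∑ i, ∑ j, w k i j * (y k i - y k j)^2 := by
    intro k
    have expand : ∀ i j, w k i j * (y k i - y k j)^2
        = 2 * (y k i * (w k i j * (y k i - y k j))) - w k i j * (y k i)^2 + w k i j * (y k j)^2 :=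
      fun i j => by ring
    calc 2 * A k = ∑ i, ∑ j, 2 * (y k i * (w k i j * (y k i - y k j))) := by
          rw [hA]
          simp only [hLy, Finset.mul_sum]
      _ = ∑ i, ∑ j, w k i j * (y k i - y k j)^2 := by
          simp only [expand]
          simp only [Finset.sum_add_distrib, Finset.sum_sub_distrib]
          rw [esymm k (fun i => (y k i)^2)]
          ring
  have hAnn : ∀ k, 0 ≤ A k := by
    intro k
    have : 0 ≤ 2 * A k := by
      rw [h2A k]
      exact Finset.sum_nonneg fun i _ => Finset.sum_nonneg fun j _ =>
        mul_nonneg (hwnn k i j) (sq_nonneg _)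
    linarith
  have hAlow : ∀ k, ε * δ * (∑ i, ∑ j, (if G.Adj i j then (y k i - y k j)^2 else 0)) ≤ 2 * A k := by
    intro k
    rw [h2A k, Finset.mul_sum]
    refine Finset.sum_le_sum fun i _ => ?_
    rw [Finset.mul_sum]
    refine Finset.sum_le_sum fun j _ => ?_
    by_cases h : G.Adj i j
    · rw [if_pos h]
      exact mul_le_mul_of_nonneg_right (hwlow k i j h) (sq_nonneg _)
    · rw [if_neg h, mul_zero]
      exact mul_nonneg (hwnn k i j) (sq_nonneg _)
  set B : ℕ → ℝ := fun k => ∑ i, (Ly k i)^2 with hB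
  have hBle : ∀ k, B k ≤ β * (2 * A k) := by
    intro k
    rw [h2A k, hB, Finset.mul_sum]
    refine Finset.sum_le_sum fun i _ => ?_
    have hCS : (∑ j, Real.sqrt (w k i j) * (Real.sqrt (w k i j) * (y k i - y k j)))^2
        ≤ (∑ j, (Real.sqrt (w k i j))^2) * ∑ j, (Real.sqrt (w k i j) * (y k i - y k j))^2 :=
      Finset.sum_mul_sq_le_sq_mul_sq univ _ _
    have e1 : ∀ j, Real.sqrt (w k i j) * (Real.sqrt (w k i j) * (y k i - y k j))
        = w k i j * (y k i - y k j) := by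
      intro j
      rw [← mul_assoc, Real.mul_self_sqrt (hwnn k i j)]
    have e2 : ∀ j, (Real.sqrt (w k i j))^2 = w k i j := fun j => Real.sq_sqrt (hwnn k i j)
    have e3 : ∀ j, (Real.sqrt (w k i j) * (y k i - y k j))^2
        = w k i j * (y k i - y k j)^2 := by
      intro j
      rw [mul_pow, e2]
    simp only [e1, e2, e3] at hCS
    have h4 : (∑ j, w k i j) * (∑ j, w k i j * (y k i - y k j)^2)
        ≤ β * ∑ j, w k i j * (y k i - y k j)^2 := by
      refine mul_le_mul_of_nonneg_right (hrow k i) ?_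
      exact Finset.sum_nonneg fun j _ => mul_nonneg (hwnn k i j) (sq_nonneg _)
    calc (Ly k i)^2 = (∑ j, w k i j * (y k i - y k j))^2 := by rw [hLy]
      _ ≤ (∑ j, w k i j) * ∑ j, w k i j * (y k i - y k j)^2 := hCS
      _ ≤ β * ∑ j, w k i j * (y k i - y k j)^2 := h4
  -- contraction
  set ρ : ℝ := (1 - abar) * (ε * δ * c) with hρ
  have hρpos : 0 < ρ := by
    rw [hρ]
    have : 0 < 1 - abar := by linarith
    positivity
  set r : ℝ := max (1 - ρ) 0 with hr
  have hr0 : 0 ≤ r := le_max_right _ _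
  have hr1 : r < 1 := max_lt (by linarith) one_pos
  have hVexp : ∀ k, V (k+1) = V k - 2 * A k + B k := by
    intro k
    have e : ∀ i, (y (k+1) i)^2 = (y k i)^2 - 2 * (y k i * Ly k i) + (Ly k i)^2 := by
      intro i
      rw [hydyn k i]
      show (y k i - Ly k i)^2 = _
      ring
    rw [hV]
    simp only [e]
    simp only [Finset.sum_add_distrib, Finset.sum_sub_distrib]
    rw [← Finset.mul_sum]
  have hVcontr : ∀ k, V (k+1) ≤ r * V k := by
    intro k
    have hQV : c * V k ≤ ∑ i, ∑ j, (if G.Adj i j then (y k i - y k j)^2 else 0) :=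
      hgap (y k) (hysum k)
    have h1 : V (k+1) ≤ V k - (1 - abar) * (2 * A k) := by
      rw [hVexp k]
      have := hBle k
      have hA2 : 0 ≤ 2 * A k := by linarith [hAnn k]
      nlinarith [hβabar]
    have h2 : (1 - abar) * (ε * δ * (c * V k)) ≤ (1 - abar) * (2 * A k) := by
      have hab : 0 ≤ 1 - abar := by linarith
      refine mul_le_mul_of_nonneg_left ?_ hab
      calc ε * δ * (c * V k) ≤ ε * δ * ∑ i, ∑ j, (if G.Adj i j then (y k i - y k j)^2 else 0) := by
            refine mul_le_mul_of_nonneg_left hQV ?_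
            positivity
        _ ≤ 2 * A k := hAlow k
    have h3 : V (k+1) ≤ (1 - ρ) * V k := by
      rw [hρ]
      nlinarith
    calc V (k+1) ≤ (1 - ρ) * V k := h3
      _ ≤ r * V k := mul_le_mul_of_nonneg_right (le_max_left _ _) (hVnn k)
  have hVgeo : ∀ k, V k ≤ r^k * V 0 := by
    intro k
    induction k with
    | zero => simp
    | succ k ih =>
      calc V (k+1) ≤ r * V k := hVcontr k
        _ ≤ r * (r^k * V 0) := mul_le_mul_of_nonneg_left ih hr0
        _ = r^(k+1) * V 0 := by ring
  have hgeo0 : Tendsto (fun k => r^k * V 0) atTop (𝓝 0) := by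
    have := (tendsto_pow_atTop_nhds_zero_of_lt_one hr0 hr1).mul_const (V 0)
    simpa using this
  have hVtend : Tendsto V atTop (𝓝 0) := squeeze_zero hVnn hVgeo hgeo0
  intro i
  have hyb : ∀ k, |y k i| ≤ Real.sqrt (V k) := by
    intro k
    have h1 : (y k i)^2 ≤ V k :=
      Finset.single_le_sum (f := fun j => (y k j)^2) (fun j _ => sq_nonneg _) (mem_univ i)
    calc |y k i| = Real.sqrt ((y k i)^2) := (Real.sqrt_sq_eq_abs _).symm
      _ ≤ Real.sqrt (V k) := Real.sqrt_le_sqrt h1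
  have hsq : Tendsto (fun k => Real.sqrt (V k)) atTop (𝓝 0) := by
    have := hVtend.sqrt
    simpa using this
  have hytend : Tendsto (fun k => y k i) atTop (𝓝 0) :=
    squeeze_zero_norm (fun k => by simpa [Real.norm_eq_abs] using hyb k) hsq
  have := hytend.add_const s
  rw [zero_add] at this
  refine this.congr fun k => ?_
  simp [hy]
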